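/- arXiv:1706.07878 — 3 statements merged into one kernel-verified Lean document; each statement's English description precedes it below -/
import Mathlib

section
/- Let γ(t) = cos(ω₁t)A₁ + sin(ω₁t)B₁ + cos(ω₂t)A₂ + sin(ω₂t)B₂ be a curve in ℝ⁴ with 0 < ω₁ < ω₂, ω₂ ≠ 3ω₁, and suppose |γ(t)| = 1 for all t. Then the vectors A₁, B₁, A₂, B₂ are pairwise orthogonal, |A₁| = |B₁|, |A₂| = |B₂|, and |A₁|² + |A₂|² = 1. -/
lemma exp_freq_inj {μ ν : ℝ}
    (h : ∀ t : ℝ, Complex.exp (μ * t * Complex.I) = Complex.exp (ν * t * Complex.I)) : μ = ν := by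
  by_contra hne
  have hd : μ - ν ≠ 0 := sub_ne_zero.2 hne
  have ht := h (Real.pi / (μ - ν))
  have h2 : Complex.exp ((μ : ℂ) * (Real.pi / (μ - ν) : ℝ) * Complex.I -
      (ν : ℂ) * (Real.pi / (μ - ν) : ℝ) * Complex.I) = 1 := by
    rw [Complex.exp_sub, ht, div_self (Complex.exp_ne_zero _)]
  have h3 : (μ : ℂ) * (Real.pi / (μ - ν) : ℝ) * Complex.I -
      (ν : ℂ) * (Real.pi / (μ - ν) : ℝ) * Complex.I = Real.pi * Complex.I := by
    have hc : ((μ : ℂ) - ν) ≠ 0 := by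
      have : ((μ - ν : ℝ) : ℂ) ≠ 0 := by exact_mod_cast hd
      push_cast at this; exact this
    push_cast
    field_simp
  rw [h3, Complex.exp_pi_mul_I] at h2
  norm_num at h2

lemma exp_lin_indep {n : ℕ} (μ : Fin n → ℝ) (hinj : Function.Injective μ)
    (c : Fin n → ℂ) (h : ∀ t : ℝ, ∑ i, c i * Complex.exp (μ i * t * Complex.I) = 0) :
    ∀ i, c i = 0 := by
  let χ : Fin n → (Multiplicative ℝ →* ℂ) := fun i =>
    { toFun := fun t => Complex.exp (μ i * (Multiplicative.toAdd t) * Complex.I)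
      map_one' := by simp
      map_mul' := by
        intro x y
        rw [← Complex.exp_add]
        push_cast [toAdd_mul]
        ring_nf }
  have hχ : Function.Injective χ := by
    intro i j hij
    apply hinj
    apply exp_freq_inj
    intro t
    exact DFunLike.congr_fun hij (Multiplicative.ofAdd t)
  have li := (linearIndependent_monoidHom (Multiplicative ℝ) ℂ).comp χ hχ
  refine Fintype.linearIndependent_iff.mp li c ?_
  funext t
  simpa [χ] using h (Multiplicative.toAdd t)

set_option maxHeartbeats 1000000 in
lemma muinj (ω₁ ω₂ : ℝ) (h1 : 0 < ω₁) (h12 : ω₁ < ω₂) (h3 : ω₂ ≠ 3*ω₁) :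
    Function.Injective ![0, 2*ω₁, -(2*ω₁), 2*ω₂, -(2*ω₂), ω₂-ω₁, ω₁-ω₂, ω₂+ω₁, -(ω₂+ω₁)] := by
  set V : Fin 9 → ℝ := ![0, 2*ω₁, -(2*ω₁), 2*ω₂, -(2*ω₂), ω₂-ω₁, ω₁-ω₂, ω₂+ω₁, -(ω₂+ω₁)] with hV
  have v0 : V 0 = 0 := rfl
  have v1 : V 1 = 2*ω₁ := rfl
  have v2 : V 2 = -(2*ω₁) := rfl
  have v3 : V 3 = 2*ω₂ := rfl
  have v4 : V 4 = -(2*ω₂) := rfl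
  have v5 : V 5 = ω₂-ω₁ := rfl
  have v6 : V 6 = ω₁-ω₂ := rfl
  have v7 : V 7 = ω₂+ω₁ := rfl
  have v8 : V 8 = -(ω₂+ω₁) := rfl
  intro i j hij
  fin_cases i <;> fin_cases j <;> simp only [] at hij ⊢ <;>
    simp only [Fin.mk_zero, Fin.mk_one, show (⟨2,by norm_num⟩ : Fin 9) = 2 from rfl,
      show (⟨3,by norm_num⟩ : Fin 9) = 3 from rfl, show (⟨4,by norm_num⟩ : Fin 9) = 4 from rfl,
      show (⟨5,by norm_num⟩ : Fin 9) = 5 from rfl, show (⟨6,by norm_num⟩ : Fin 9) = 6 from rfl,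
      show (⟨7,by norm_num⟩ : Fin 9) = 7 from rfl, show (⟨8,by norm_num⟩ : Fin 9) = 8 from rfl,
      v0, v1, v2, v3, v4, v5, v6, v7, v8] at hij ⊢ <;>
    first
      | rfl
      | (exact absurd (by linarith) h3)
      | linarith

set_option maxHeartbeats 4000000 in
theorem stmt_8 (ω₁ ω₂ : ℝ) (h1 : 0 < ω₁) (h12 : ω₁ < ω₂) (h3 : ω₂ ≠ 3 * ω₁)
    (A₁ B₁ A₂ B₂ : EuclideanSpace ℝ (Fin 4))
    (γ : ℝ → EuclideanSpace ℝ (Fin 4))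
    (hγ : ∀ t : ℝ, γ t =
      Real.cos (ω₁ * t) • A₁ + Real.sin (ω₁ * t) • B₁ +
        Real.cos (ω₂ * t) • A₂ + Real.sin (ω₂ * t) • B₂)
    (hsphere : ∀ t : ℝ, ‖γ t‖ = 1) :
    inner ℝ A₁ B₁ = (0 : ℝ) ∧ inner ℝ A₁ A₂ = (0 : ℝ) ∧ inner ℝ A₁ B₂ = (0 : ℝ) ∧
      inner ℝ B₁ A₂ = (0 : ℝ) ∧ inner ℝ B₁ B₂ = (0 : ℝ) ∧ inner ℝ A₂ B₂ = (0 : ℝ) ∧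
      ‖A₁‖ = ‖B₁‖ ∧ ‖A₂‖ = ‖B₂‖ ∧ ‖A₁‖ ^ 2 + ‖A₂‖ ^ 2 = 1 := by
  set x11 : ℝ := inner ℝ A₁ A₁ with hx11
  set x22 : ℝ := inner ℝ B₁ B₁ with hx22
  set x33 : ℝ := inner ℝ A₂ A₂ with hx33
  set x44 : ℝ := inner ℝ B₂ B₂ with hx44
  set q12 : ℝ := inner ℝ A₁ B₁ with hq12
  set q13 : ℝ := inner ℝ A₁ A₂ with hq13
  set q14 : ℝ := inner ℝ A₁ B₂ with hq14
  set q23 : ℝ := inner ℝ B₁ A₂ with hq23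
  set q24 : ℝ := inner ℝ B₁ B₂ with hq24
  set q34 : ℝ := inner ℝ A₂ B₂ with hq34
  -- canonical real identity
  have hE : ∀ t : ℝ,
      Real.cos (ω₁*t)^2 * x11 + Real.sin (ω₁*t)^2 * x22 +
      Real.cos (ω₂*t)^2 * x33 + Real.sin (ω₂*t)^2 * x44 +
      2 * (Real.cos (ω₁*t) * Real.sin (ω₁*t)) * q12 +
      2 * (Real.cos (ω₁*t) * Real.cos (ω₂*t)) * q13 +
      2 * (Real.cos (ω₁*t) * Real.sin (ω₂*t)) * q14 +
      2 * (Real.sin (ω₁*t) * Real.cos (ω₂*t)) * q23 +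
      2 * (Real.sin (ω₁*t) * Real.sin (ω₂*t)) * q24 +
      2 * (Real.cos (ω₂*t) * Real.sin (ω₂*t)) * q34 = 1 := by
    intro t
    have h2 : (inner ℝ (γ t) (γ t) : ℝ) = 1 := by
      rw [real_inner_self_eq_norm_sq, hsphere t]; norm_num
    rw [hγ t] at h2
    simp only [inner_add_left, inner_add_right, real_inner_smul_left,
      real_inner_smul_right] at h2
    rw [real_inner_comm A₁ B₁, real_inner_comm A₁ A₂, real_inner_comm A₁ B₂,
        real_inner_comm B₁ A₂, real_inner_comm B₁ B₂, real_inner_comm A₂ B₂] at h2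
    linear_combination h2
  -- Fourier coefficients
  set K : ℝ := (x11 + x22 + x33 + x44)/2 with hK
  set P : ℝ := (x11 - x22)/2 with hP
  set R : ℝ := (x33 - x44)/2 with hR
  set U : ℝ := q13 + q24 with hU
  set V : ℝ := q14 - q23 with hV
  set W : ℝ := q13 - q24 with hW
  set X : ℝ := q14 + q23 with hX
  set μv : Fin 9 → ℝ := ![0, 2*ω₁, -(2*ω₁), 2*ω₂, -(2*ω₂), ω₂-ω₁, ω₁-ω₂, ω₂+ω₁, -(ω₂+ω₁)] with hμv
  set cv : Fin 9 → ℂ :=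
    ![(K:ℂ) - 1, ((P:ℂ) - q12*Complex.I)/2, ((P:ℂ) + q12*Complex.I)/2,
      ((R:ℂ) - q34*Complex.I)/2, ((R:ℂ) + q34*Complex.I)/2,
      ((U:ℂ) - V*Complex.I)/2, ((U:ℂ) + V*Complex.I)/2,
      ((W:ℂ) - X*Complex.I)/2, ((W:ℂ) + X*Complex.I)/2] with hcv
  have hinj : Function.Injective μv := muinj ω₁ ω₂ h1 h12 h3
  have key : ∀ t : ℝ, ∑ i, cv i * Complex.exp (μv i * t * Complex.I) = 0 := by
    intro t
    have hEt := hE t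
    have p1 : Real.sin (ω₁*t)^2 + Real.cos (ω₁*t)^2 = 1 := Real.sin_sq_add_cos_sq _
    have p2 : Real.sin (ω₂*t)^2 + Real.cos (ω₂*t)^2 = 1 := Real.sin_sq_add_cos_sq _
    have erw : ∀ θ : ℝ, Complex.exp (θ * t * Complex.I)
        = (Real.cos (θ*t) : ℂ) + (Real.sin (θ*t) : ℂ) * Complex.I := by
      intro θ
      rw [show ((θ:ℂ) * t * Complex.I) = (((θ*t : ℝ)) : ℂ) * Complex.I by push_cast; ring,
          Complex.exp_mul_I, Complex.ofReal_cos, Complex.ofReal_sin]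
    simp only [Fin.sum_univ_succ, Finset.card_univ, Fintype.univ_ofSubsingleton,
      Fin.sum_univ_zero, Finset.sum_singleton, Matrix.cons_val_fin_one, hμv, hcv, Matrix.cons_val_zero, Matrix.cons_val_one, Matrix.head_cons,
      Matrix.cons_val_succ, erw]
    rw [show (2*ω₁)*t = ω₁*t + ω₁*t by ring, show (-(2*ω₁))*t = -(ω₁*t + ω₁*t) by ring,
        show (2*ω₂)*t = ω₂*t + ω₂*t by ring, show (-(2*ω₂))*t = -(ω₂*t + ω₂*t) by ring,
        show (ω₂-ω₁)*t = ω₂*t - ω₁*t by ring, show (ω₁-ω₂)*t = -(ω₂*t - ω₁*t) by ring,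
        show (ω₂+ω₁)*t = ω₂*t + ω₁*t by ring, show (-(ω₂+ω₁))*t = -(ω₂*t + ω₁*t) by ring]
    simp only [Real.cos_neg, Real.sin_neg, Real.cos_add, Real.sin_add, Real.cos_sub,
      Real.sin_sub]
    rw [Complex.ext_iff]
    constructor <;>
      simp only [Complex.add_re, Complex.add_im, Complex.mul_re, Complex.mul_im,
        Complex.sub_re, Complex.sub_im, Complex.div_re, Complex.div_im, Complex.I_re,
        Complex.I_im, Complex.ofReal_re, Complex.ofReal_im, Complex.zero_re, Complex.zero_im,
        Complex.one_re, Complex.one_im, Complex.normSq_ofNat, Complex.ofReal_mul,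
        Complex.re_ofNat, Complex.im_ofNat, zero_mul, Real.cos_zero, Real.sin_zero] <;>
      push_cast <;>
      ring_nf
    all_goals linear_combination (norm := (simp -failIfUnchanged only [hK, hP, hR, hU, hV, hW, hX]; ring_nf)) hEt - (x11+x22)/2 * p1 - (x33+x44)/2 * p2
  have hc := exp_lin_indep μv hinj cv key
  have hK1 : K = 1 := by
    have h := hc 0
    rw [show cv 0 = (K:ℂ) - 1 from rfl] at h
    have : (K:ℂ) = 1 := by linear_combination h
    exact_mod_cast this
  have eP : P = 0 ∧ q12 = 0 := by
    have h := hc 1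
    rw [show cv 1 = ((P:ℂ) - q12*Complex.I)/2 from rfl] at h
    rw [div_eq_zero_iff] at h
    rcases h with h | h
    · simpa [Complex.ext_iff] using h
    · norm_num at h
  have eR : R = 0 ∧ q34 = 0 := by
    have h := hc 3
    rw [show cv 3 = ((R:ℂ) - q34*Complex.I)/2 from rfl] at h
    rw [div_eq_zero_iff] at h
    rcases h with h | h
    · simpa [Complex.ext_iff] using h
    · norm_num at h
  have eU : U = 0 ∧ V = 0 := by
    have h := hc 5
    rw [show cv 5 = ((U:ℂ) - V*Complex.I)/2 from rfl] at h
    rw [div_eq_zero_iff] at h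
    rcases h with h | h
    · simpa [Complex.ext_iff] using h
    · norm_num at h
  have eW : W = 0 ∧ X = 0 := by
    have h := hc 7
    rw [show cv 7 = ((W:ℂ) - X*Complex.I)/2 from rfl] at h
    rw [div_eq_zero_iff] at h
    rcases h with h | h
    · simpa [Complex.ext_iff] using h
    · norm_num at h
  obtain ⟨hP0, hq12z⟩ := eP
  obtain ⟨hR0, hq34z⟩ := eR
  obtain ⟨hU0, hV0⟩ := eU
  obtain ⟨hW0, hX0⟩ := eW
  have hPv : x11 - x22 = 0 := by rw [hP] at hP0; linarith
  have hRv : x33 - x44 = 0 := by rw [hR] at hR0; linarith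
  have hUv : q13 + q24 = 0 := by rw [hU] at hU0; linarith
  have hVv : q14 - q23 = 0 := by rw [hV] at hV0; linarith
  have hWv : q13 - q24 = 0 := by rw [hW] at hW0; linarith
  have hXv : q14 + q23 = 0 := by rw [hX] at hX0; linarith
  have hKv : x11 + x22 + x33 + x44 = 2 := by rw [hK] at hK1; linarith
  have hx11n : x11 = ‖A₁‖^2 := real_inner_self_eq_norm_sq A₁
  have hx22n : x22 = ‖B₁‖^2 := real_inner_self_eq_norm_sq B₁
  have hx33n : x33 = ‖A₂‖^2 := real_inner_self_eq_norm_sq A₂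
  have hx44n : x44 = ‖B₂‖^2 := real_inner_self_eq_norm_sq B₂
  refine ⟨by linarith, by linarith, by linarith, by linarith, by linarith, by linarith, ?_, ?_, ?_⟩
  · have : ‖A₁‖^2 = ‖B₁‖^2 := by rw [← hx11n, ← hx22n]; linarith [hP, hP0]
    exact (sq_eq_sq₀ (norm_nonneg _) (norm_nonneg _)).mp this
  · have : ‖A₂‖^2 = ‖B₂‖^2 := by rw [← hx33n, ← hx44n]; linarith
    exact (sq_eq_sq₀ (norm_nonneg _) (norm_nonneg _)).mp this
  · rw [← hx11n, ← hx33n]; linarith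
end

section
/- Let γ(t) = cos(ω₁t)A₁ + sin(ω₁t)B₁ + cos(ω₂t)A₂ + sin(ω₂t)B₂ with ω₂ = 3ω₁ > 0, and suppose |γ(t)| = 1 and |γ'(t)| = C (constant) for all t. Then A₁, B₁, A₂, B₂ are pairwise orthogonal, |A₁| = |B₁|, |A₂| = |B₂|, and |A₁|² + |A₂|² = 1. -/
open Real
set_option maxHeartbeats 2000000 in

theorem stmt_9 (ω₁ ω₂ : ℝ) (h1 : 0 < ω₁) (h3 : ω₂ = 3 * ω₁)
    (A₁ B₁ A₂ B₂ : EuclideanSpace ℝ (Fin 4))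
    (γ : ℝ → EuclideanSpace ℝ (Fin 4))
    (hγ : ∀ t : ℝ, γ t =
      Real.cos (ω₁ * t) • A₁ + Real.sin (ω₁ * t) • B₁ +
        Real.cos (ω₂ * t) • A₂ + Real.sin (ω₂ * t) • B₂)
    (hsphere : ∀ t : ℝ, ‖γ t‖ = 1)
    (Cs : ℝ) (hspeed : ∀ t : ℝ, ‖deriv γ t‖ = Cs) :
    inner ℝ A₁ B₁ = (0 : ℝ) ∧ inner ℝ A₁ A₂ = (0 : ℝ) ∧ inner ℝ A₁ B₂ = (0 : ℝ) ∧
      inner ℝ B₁ A₂ = (0 : ℝ) ∧ inner ℝ B₁ B₂ = (0 : ℝ) ∧ inner ℝ A₂ B₂ = (0 : ℝ) ∧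
      ‖A₁‖ = ‖B₁‖ ∧ ‖A₂‖ = ‖B₂‖ ∧ ‖A₁‖ ^ 2 + ‖A₂‖ ^ 2 = 1 := by
  subst h3
  have hw : ω₁ ≠ 0 := ne_of_gt h1
  set a1 : ℝ := inner ℝ A₁ A₁ with ha1
  set b1 : ℝ := inner ℝ B₁ B₁ with hb1
  set a2 : ℝ := inner ℝ A₂ A₂ with ha2
  set b2 : ℝ := inner ℝ B₂ B₂ with hb2
  set p : ℝ := inner ℝ A₁ B₁ with hp
  set q : ℝ := inner ℝ A₁ A₂ with hq
  set r : ℝ := inner ℝ A₁ B₂ with hr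
  set w : ℝ := inner ℝ B₁ A₂ with hws
  set u : ℝ := inner ℝ B₁ B₂ with hu
  set v : ℝ := inner ℝ A₂ B₂ with hv
  -- derivative of γ
  have hderiv : ∀ t : ℝ, deriv γ t =
      (-(ω₁ * Real.sin (ω₁*t))) • A₁ + (ω₁ * Real.cos (ω₁*t)) • B₁ +
      (-((3*ω₁) * Real.sin ((3*ω₁)*t))) • A₂ + ((3*ω₁) * Real.cos ((3*ω₁)*t)) • B₂ := by
    intro t
    have hc1 : HasDerivAt (fun t : ℝ => Real.cos (ω₁ * t)) (-(ω₁ * Real.sin (ω₁*t))) t := by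
      simpa [Function.comp_def, mul_comm] using (Real.hasDerivAt_cos (ω₁*t)).comp t ((hasDerivAt_id t).const_mul ω₁)
    have hs1 : HasDerivAt (fun t : ℝ => Real.sin (ω₁ * t)) (ω₁ * Real.cos (ω₁*t)) t := by
      simpa [Function.comp_def, mul_comm] using (Real.hasDerivAt_sin (ω₁*t)).comp t ((hasDerivAt_id t).const_mul ω₁)
    have hc2 : HasDerivAt (fun t : ℝ => Real.cos ((3*ω₁) * t)) (-((3*ω₁) * Real.sin ((3*ω₁)*t))) t := by
      simpa [Function.comp_def, mul_comm] using (Real.hasDerivAt_cos ((3*ω₁)*t)).comp t ((hasDerivAt_id t).const_mul (3*ω₁))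
    have hs2 : HasDerivAt (fun t : ℝ => Real.sin ((3*ω₁) * t)) ((3*ω₁) * Real.cos ((3*ω₁)*t)) t := by
      simpa [Function.comp_def, mul_comm] using (Real.hasDerivAt_sin ((3*ω₁)*t)).comp t ((hasDerivAt_id t).const_mul (3*ω₁))
    have h : HasDerivAt γ
        ((-(ω₁ * Real.sin (ω₁*t))) • A₁ + (ω₁ * Real.cos (ω₁*t)) • B₁ +
         (-((3*ω₁) * Real.sin ((3*ω₁)*t))) • A₂ + ((3*ω₁) * Real.cos ((3*ω₁)*t)) • B₂) t := by
      have h' : HasDerivAt (fun t : ℝ => Real.cos (ω₁ * t) • A₁ + Real.sin (ω₁ * t) • B₁ +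
          Real.cos ((3*ω₁) * t) • A₂ + Real.sin ((3*ω₁) * t) • B₂)
          ((-(ω₁ * Real.sin (ω₁*t))) • A₁ + (ω₁ * Real.cos (ω₁*t)) • B₁ +
           (-((3*ω₁) * Real.sin ((3*ω₁)*t))) • A₂ + ((3*ω₁) * Real.cos ((3*ω₁)*t)) • B₂) t :=
        (((hc1.smul_const A₁).add (hs1.smul_const B₁)).add (hc2.smul_const A₂)).add
          (hs2.smul_const B₂)
      exact (funext hγ : γ = _) ▸ h'
    exact h.deriv
  -- sphere identity
  have key : ∀ x : ℝ,
      a1 * Real.cos x ^ 2 + b1 * Real.sin x ^ 2 + a2 * Real.cos (3*x) ^ 2 +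
        b2 * Real.sin (3*x) ^ 2 + 2*p*(Real.cos x * Real.sin x) +
        2*q*(Real.cos x * Real.cos (3*x)) + 2*r*(Real.cos x * Real.sin (3*x)) +
        2*w*(Real.sin x * Real.cos (3*x)) + 2*u*(Real.sin x * Real.sin (3*x)) +
        2*v*(Real.cos (3*x) * Real.sin (3*x)) = 1 := by
    intro x
    have hx : ω₁ * (x / ω₁) = x := by field_simp
    have hx3 : (3*ω₁) * (x / ω₁) = 3*x := by field_simp
    have h2 : (inner ℝ (γ (x/ω₁)) (γ (x/ω₁)) : ℝ) = 1 := by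
      rw [real_inner_self_eq_norm_sq, hsphere]; norm_num
    rw [hγ (x/ω₁), hx, hx3] at h2
    simp only [inner_add_left, inner_add_right, real_inner_smul_left, real_inner_smul_right] at h2
    rw [ha1, hb1, ha2, hb2, hp, hq, hr, hws, hu, hv]
    linear_combination h2 + (Real.cos x * Real.sin x)*real_inner_comm B₁ A₁
      + (Real.cos x * Real.cos (3*x))*real_inner_comm A₂ A₁
      + (Real.cos x * Real.sin (3*x))*real_inner_comm B₂ A₁
      + (Real.sin x * Real.cos (3*x))*real_inner_comm A₂ B₁
      + (Real.sin x * Real.sin (3*x))*real_inner_comm B₂ B₁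
      + (Real.cos (3*x) * Real.sin (3*x))*real_inner_comm B₂ A₂
  -- speed identity
  have keyD : ∀ x : ℝ,
      a1 * Real.sin x ^ 2 + b1 * Real.cos x ^ 2 + 9*a2 * Real.sin (3*x) ^ 2 +
        9*b2 * Real.cos (3*x) ^ 2 - 2*p*(Real.sin x * Real.cos x) +
        6*q*(Real.sin x * Real.sin (3*x)) - 6*r*(Real.sin x * Real.cos (3*x)) -
        6*w*(Real.cos x * Real.sin (3*x)) + 6*u*(Real.cos x * Real.cos (3*x)) -
        18*v*(Real.sin (3*x) * Real.cos (3*x)) = Cs^2 / ω₁^2 := by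
    intro x
    have hx : ω₁ * (x / ω₁) = x := by field_simp
    have hx3 : (3*ω₁) * (x / ω₁) = 3*x := by field_simp
    have h2 : (inner ℝ (deriv γ (x/ω₁)) (deriv γ (x/ω₁)) : ℝ) = Cs^2 := by
      rw [real_inner_self_eq_norm_sq, hspeed]
    rw [hderiv (x/ω₁), hx, hx3] at h2
    simp only [inner_add_left, inner_add_right, real_inner_smul_left, real_inner_smul_right] at h2
    rw [ha1, hb1, ha2, hb2, hp, hq, hr, hws, hu, hv, eq_div_iff (pow_ne_zero 2 hw)]
    linear_combination h2
      + ((-(ω₁ * Real.sin x)) * (ω₁ * Real.cos x))*real_inner_comm B₁ A₁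
      + ((-(ω₁ * Real.sin x)) * (-((3*ω₁) * Real.sin (3*x))))*real_inner_comm A₂ A₁
      + ((-(ω₁ * Real.sin x)) * ((3*ω₁) * Real.cos (3*x)))*real_inner_comm B₂ A₁
      + ((ω₁ * Real.cos x) * (-((3*ω₁) * Real.sin (3*x))))*real_inner_comm A₂ B₁
      + ((ω₁ * Real.cos x) * ((3*ω₁) * Real.cos (3*x)))*real_inner_comm B₂ B₁
      + ((-((3*ω₁) * Real.sin (3*x))) * ((3*ω₁) * Real.cos (3*x)))*real_inner_comm B₂ A₂

  -- trig constants
  have s3 : Real.sqrt 3 ^ 2 = 3 := Real.sq_sqrt (by norm_num)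
  have s2 : Real.sqrt 2 ^ 2 = 2 := Real.sq_sqrt (by norm_num)
  have s3ne : Real.sqrt 3 ≠ 0 := by positivity
  -- instantiate sphere identity
  have k0 := key 0
  rw [show (3:ℝ)*0 = 0 by ring, Real.cos_zero, Real.sin_zero] at k0
  have k2 := key (π/2)
  rw [show (3:ℝ)*(π/2) = π/2 + π by ring, Real.cos_add_pi, Real.sin_add_pi,
    Real.cos_pi_div_two, Real.sin_pi_div_two] at k2
  have k16 := key (π/6)
  rw [show (3:ℝ)*(π/6) = π/2 by ring, Real.cos_pi_div_six, Real.sin_pi_div_six,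
    Real.cos_pi_div_two, Real.sin_pi_div_two] at k16
  have k56 := key (π - π/6)
  rw [show (3:ℝ)*(π - π/6) = π/2 + 2*π by ring, Real.cos_add_two_pi, Real.sin_add_two_pi,
    Real.cos_pi_sub, Real.sin_pi_sub, Real.cos_pi_div_six, Real.sin_pi_div_six,
    Real.cos_pi_div_two, Real.sin_pi_div_two] at k56
  have k13 := key (π/3)
  rw [show (3:ℝ)*(π/3) = π by ring, Real.cos_pi, Real.sin_pi,
    Real.cos_pi_div_three, Real.sin_pi_div_three] at k13
  have k23 := key (π - π/3)
  rw [show (3:ℝ)*(π - π/3) = 0 + 2*π by ring, Real.cos_add_two_pi, Real.sin_add_two_pi,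
    Real.cos_zero, Real.sin_zero, Real.cos_pi_sub, Real.sin_pi_sub,
    Real.cos_pi_div_three, Real.sin_pi_div_three] at k23
  have k14 := key (π/4)
  rw [show (3:ℝ)*(π/4) = π - π/4 by ring, Real.cos_pi_sub, Real.sin_pi_sub,
    Real.cos_pi_div_four, Real.sin_pi_div_four] at k14
  have k34 := key (π - π/4)
  rw [show (3:ℝ)*(π - π/4) = π/4 + 2*π by ring, Real.cos_add_two_pi, Real.sin_add_two_pi,
    Real.cos_pi_sub, Real.sin_pi_sub, Real.cos_pi_div_four, Real.sin_pi_div_four] at k34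
  -- instantiate speed identity
  have d0 := keyD 0
  rw [show (3:ℝ)*0 = 0 by ring, Real.cos_zero, Real.sin_zero] at d0
  have d2 := keyD (π/2)
  rw [show (3:ℝ)*(π/2) = π/2 + π by ring, Real.cos_add_pi, Real.sin_add_pi,
    Real.cos_pi_div_two, Real.sin_pi_div_two] at d2
  have d16 := keyD (π/6)
  rw [show (3:ℝ)*(π/6) = π/2 by ring, Real.cos_pi_div_six, Real.sin_pi_div_six,
    Real.cos_pi_div_two, Real.sin_pi_div_two] at d16
  have d56 := keyD (π - π/6)
  rw [show (3:ℝ)*(π - π/6) = π/2 + 2*π by ring, Real.cos_add_two_pi, Real.sin_add_two_pi,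
    Real.cos_pi_sub, Real.sin_pi_sub, Real.cos_pi_div_six, Real.sin_pi_div_six,
    Real.cos_pi_div_two, Real.sin_pi_div_two] at d56
  have d13 := keyD (π/3)
  rw [show (3:ℝ)*(π/3) = π by ring, Real.cos_pi, Real.sin_pi,
    Real.cos_pi_div_three, Real.sin_pi_div_three] at d13
  have d23 := keyD (π - π/3)
  rw [show (3:ℝ)*(π - π/3) = 0 + 2*π by ring, Real.cos_add_two_pi, Real.sin_add_two_pi,
    Real.cos_zero, Real.sin_zero, Real.cos_pi_sub, Real.sin_pi_sub,
    Real.cos_pi_div_three, Real.sin_pi_div_three] at d23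
  have d14 := keyD (π/4)
  rw [show (3:ℝ)*(π/4) = π - π/4 by ring, Real.cos_pi_sub, Real.sin_pi_sub,
    Real.cos_pi_div_four, Real.sin_pi_div_four] at d14
  have d34 := keyD (π - π/4)
  rw [show (3:ℝ)*(π - π/4) = π/4 + 2*π by ring, Real.cos_add_two_pi, Real.sin_add_two_pi,
    Real.cos_pi_sub, Real.sin_pi_sub, Real.cos_pi_div_four, Real.sin_pi_div_four] at d34
  -- clean rational equations
  have R1 : a1 + a2 + 2*q = 1 := by linear_combination k0
  have R2 : b1 + b2 - 2*u = 1 := by linear_combination k2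
  have R3 : b1 + 9*b2 + 6*u = Cs^2/ω₁^2 := by linear_combination d0
  have R4 : a1 + 9*a2 - 6*q = Cs^2/ω₁^2 := by linear_combination d2
  have R5 : a1/2 + b1/2 + a2/2 + b2/2 + p - q + r - w + u - v = 1 := by
    linear_combination k14 + (-(a1+b1+a2+b2)/4 - p/2 + q/2 - r/2 + w/2 - u/2 + v/2) * s2
  have R6 : a1/2 + b1/2 + a2/2 + b2/2 - p - q - r + w + u + v = 1 := by
    linear_combination k34 + (-(a1+b1+a2+b2)/4 + p/2 + q/2 + r/2 - w/2 - u/2 - v/2) * s2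
  have R7 : a1/2 + b1/2 + 9*a2/2 + 9*b2/2 - p + 3*q + 3*r - 3*w - 3*u + 9*v = Cs^2/ω₁^2 := by
    linear_combination d14 + (-a1/4 - b1/4 - 9*a2/4 - 9*b2/4 + p/2 - 3*q/2 - 3*r/2 + 3*w/2 + 3*u/2 - 9*v/2) * s2
  have R8 : a1/2 + b1/2 + 9*a2/2 + 9*b2/2 + p + 3*q - 3*r + 3*w - 3*u - 9*v = Cs^2/ω₁^2 := by
    linear_combination d34 + (-a1/4 - b1/4 - 9*a2/4 - 9*b2/4 - p/2 - 3*q/2 + 3*r/2 - 3*w/2 + 3*u/2 + 9*v/2) * s2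
  have R9 : 3/2*a1 + 1/2*b1 + 2*b2 + 2*u = 2 := by
    linear_combination k16 + k56 - a1/2 * s3
  have R10 : p + 2*r = 0 :=
    (mul_eq_zero.mp (show Real.sqrt 3 * (p + 2*r) = 0 by linear_combination k16 - k56)).resolve_left s3ne
  have R11 : 1/2*a1 + 3/2*b1 + 18*a2 + 6*q = 2*(Cs^2/ω₁^2) := by
    linear_combination d16 + d56 - b1/2 * s3
  have R12 : p + 6*w = 0 :=
    (mul_eq_zero.mp (show Real.sqrt 3 * (p + 6*w) = 0 by linear_combination d56 - d16)).resolve_left s3ne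
  have R13 : 1/2*a1 + 3/2*b1 + 2*a2 - 2*q = 2 := by
    linear_combination k13 + k23 - b1/2 * s3
  have R14 : p - 2*w = 0 :=
    (mul_eq_zero.mp (show Real.sqrt 3 * (p - 2*w) = 0 by linear_combination k13 - k23)).resolve_left s3ne
  have R15 : 3/2*a1 + 1/2*b1 + 18*b2 - 6*u = 2*(Cs^2/ω₁^2) := by
    linear_combination d13 + d23 - a1/2 * s3
  have R16 : p - 6*r = 0 :=
    (mul_eq_zero.mp (show Real.sqrt 3 * (p - 6*r) = 0 by linear_combination d23 - d13)).resolve_left s3ne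
  -- solve the linear system
  refine ⟨by linarith, by linarith, by linarith, by linarith, by linarith, by linarith, ?_, ?_, ?_⟩
  · have e : ‖A₁‖^2 = ‖B₁‖^2 := by
      rw [← real_inner_self_eq_norm_sq A₁, ← real_inner_self_eq_norm_sq B₁, ← ha1, ← hb1]
      linarith
    calc ‖A₁‖ = Real.sqrt (‖A₁‖^2) := (Real.sqrt_sq (norm_nonneg _)).symm
      _ = Real.sqrt (‖B₁‖^2) := by rw [e]
      _ = ‖B₁‖ := Real.sqrt_sq (norm_nonneg _)
  · have e : ‖A₂‖^2 = ‖B₂‖^2 := by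
      rw [← real_inner_self_eq_norm_sq A₂, ← real_inner_self_eq_norm_sq B₂, ← ha2, ← hb2]
      linarith
    calc ‖A₂‖ = Real.sqrt (‖A₂‖^2) := (Real.sqrt_sq (norm_nonneg _)).symm
      _ = Real.sqrt (‖B₂‖^2) := by rw [e]
      _ = ‖B₂‖ := Real.sqrt_sq (norm_nonneg _)
  · rw [← real_inner_self_eq_norm_sq A₁, ← real_inner_self_eq_norm_sq A₂, ← ha1, ← ha2]
    linarith
end

section
/- Let γ(t) = A₁ + cos(ωt)A₂ + sin(ωt)B₂ with ω > 0, and suppose |γ(t)| = 1 for all t. Then A₁, A₂, B₂ are pairwise orthogonal, |A₂| = |B₂|, and |A₁|² + |A₂|² = 1. -/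
theorem stmt_10 (ω : ℝ) (hω : 0 < ω)
    (A₁ A₂ B₂ : EuclideanSpace ℝ (Fin 4))
    (γ : ℝ → EuclideanSpace ℝ (Fin 4))
    (hγ : ∀ t : ℝ, γ t = A₁ + Real.cos (ω * t) • A₂ + Real.sin (ω * t) • B₂)
    (hsphere : ∀ t : ℝ, ‖γ t‖ = 1) :
    inner ℝ A₁ A₂ = (0 : ℝ) ∧ inner ℝ A₁ B₂ = (0 : ℝ) ∧ inner ℝ A₂ B₂ = (0 : ℝ) ∧
      ‖A₂‖ = ‖B₂‖ ∧ ‖A₁‖ ^ 2 + ‖A₂‖ ^ 2 = 1 := by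
  have hω' : ω ≠ 0 := ne_of_gt hω
  have key : ∀ t : ℝ, ‖A₁‖^2 + (Real.cos (ω*t))^2 * ‖A₂‖^2
      + (Real.sin (ω*t))^2 * ‖B₂‖^2
      + 2 * Real.cos (ω*t) * (inner ℝ A₁ A₂ : ℝ)
      + 2 * Real.sin (ω*t) * (inner ℝ A₁ B₂ : ℝ)
      + 2 * Real.cos (ω*t) * Real.sin (ω*t) * (inner ℝ A₂ B₂ : ℝ) = 1 := by
    intro t
    have h1 := hsphere t
    have h2 : (inner ℝ (γ t) (γ t) : ℝ) = 1 := by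
      rw [real_inner_self_eq_norm_sq, h1]; norm_num
    rw [hγ] at h2
    simp only [inner_add_left, inner_add_right, real_inner_smul_left,
      real_inner_smul_right, real_inner_self_eq_norm_sq] at h2
    rw [norm_smul, norm_smul, Real.norm_eq_abs, Real.norm_eq_abs, mul_pow, mul_pow,
      sq_abs, sq_abs] at h2
    linear_combination h2 + Real.cos (ω*t) * real_inner_comm A₂ A₁
      + Real.sin (ω*t) * real_inner_comm B₂ A₁
      + Real.cos (ω*t) * Real.sin (ω*t) * real_inner_comm B₂ A₂
  have e0 := key 0
  have e1 := key (Real.pi / ω)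
  have e2 := key (Real.pi / (2 * ω))
  have e3 := key (-(Real.pi / (2 * ω)))
  have e4 := key (Real.pi / (4 * ω))
  have r1 : ω * (Real.pi / ω) = Real.pi := by field_simp
  have r2 : ω * (Real.pi / (2 * ω)) = Real.pi / 2 := by field_simp
  have r3 : ω * (-(Real.pi / (2 * ω))) = -(Real.pi / 2) := by field_simp
  have r4 : ω * (Real.pi / (4 * ω)) = Real.pi / 4 := by field_simp
  rw [r1] at e1
  rw [r2] at e2
  rw [r3] at e3
  rw [r4] at e4
  simp only [mul_zero, Real.cos_zero, Real.sin_zero, Real.cos_pi, Real.sin_pi,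
    Real.cos_pi_div_two, Real.sin_pi_div_two, Real.cos_pi_div_four, Real.sin_pi_div_four,
    Real.cos_neg, Real.sin_neg] at e0 e1 e2 e3 e4
  have hp : (inner ℝ A₁ A₂ : ℝ) = 0 := by linarith
  have hq : (inner ℝ A₁ B₂ : ℝ) = 0 := by linarith
  have hbd : ‖A₂‖^2 = ‖B₂‖^2 := by linarith
  have hsq2' : Real.sqrt 2 ^ 2 = 2 := Real.sq_sqrt (by norm_num)
  rw [hp, hq] at e4
  have hr : (inner ℝ A₂ B₂ : ℝ) = 0 := by nlinarith [e4, e0, hbd, hsq2']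
  refine ⟨hp, hq, hr, ?_, by linarith⟩
  rw [← Real.sqrt_sq (norm_nonneg A₂), ← Real.sqrt_sq (norm_nonneg B₂), hbd]
end
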